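/- Let J be a positive integer, let u_1, …, u_J be nonzero integers, and let δ > 0 be a real number. Let s_j, t_j, q_j (1 ≤ j ≤ J) be complex numbers with |s_j| < 1, |t_j| < 1, and |q_j| < 1. Then |∏_{j=1}^J (s_j, t_j; q_j)^{u_j δ} − 1| ≤ ∏_{j=1}^J (|s_j|, |t_j|; |q_j|)^{−|u_j| δ} − 1. -/

import Mathlib

open scoped BigOperators

noncomputable def pochC (s t q : ℂ) (c : ℝ) : ℂ :=
  ∏' i : ℕ, ((1 - s * q ^ i) ^ (c : ℂ)) * ((1 - t * q ^ i) ^ (c : ℂ))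

noncomputable def pochR (s t q : ℝ) (c : ℝ) : ℝ :=
  ∏' i : ℕ, ((1 - s * q ^ i) * (1 - t * q ^ i)) ^ c

/-- `|e^z - 1| ≤ e^{|z|} - 1`. -/
lemma abs_cexp_sub_one_le (z : ℂ) :
    ‖Complex.exp z - 1‖ ≤ Real.exp (‖z‖) - 1 := by
  have hC : HasSum (fun n : ℕ => z ^ n / (Nat.factorial n)) (Complex.exp z) := by
    rw [Complex.exp_eq_exp_ℂ]; exact NormedSpace.expSeries_div_hasSum_exp z
  have hR : HasSum (fun n : ℕ => (‖z‖) ^ n / (Nat.factorial n)) (Real.exp (‖z‖)) := by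
    rw [Real.exp_eq_exp_ℝ]; exact NormedSpace.expSeries_div_hasSum_exp (‖z‖)
  have hC' : HasSum (fun n : ℕ => z ^ (n + 1) / (Nat.factorial (n+1))) (Complex.exp z - 1) := by
    rw [hasSum_nat_add_iff (f := fun n : ℕ => z ^ n / (Nat.factorial n)) 1]
    simpa using hC
  have hR' : HasSum (fun n : ℕ => (‖z‖) ^ (n + 1) / (Nat.factorial (n+1)))
      (Real.exp (‖z‖) - 1) := by
    rw [hasSum_nat_add_iff (f := fun n : ℕ => (‖z‖) ^ n / (Nat.factorial n)) 1]
    simpa using hR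
  have hnorm : ∀ n : ℕ, ‖z ^ (n + 1) / ((Nat.factorial (n+1)) : ℂ)‖ =
      (‖z‖) ^ (n + 1) / ((Nat.factorial (n+1)) : ℝ) := by
    intro n
    simp [norm_div, norm_pow, Complex.norm_natCast]
  calc ‖Complex.exp z - 1‖ = ‖∑' n : ℕ, z ^ (n + 1) / (Nat.factorial (n+1))‖ := by
        rw [hC'.tsum_eq]
    _ ≤ ∑' n : ℕ, ‖z ^ (n + 1) / ((Nat.factorial (n+1)) : ℂ)‖ := by
        apply norm_tsum_le_tsum_norm
        simpa only [hnorm] using hR'.summable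
    _ = Real.exp (‖z‖) - 1 := by
        rw [← hR'.tsum_eq]
        exact tsum_congr hnorm

lemma hasSum_neg_log_real {a : ℝ} (h0 : 0 ≤ a) (h1 : a < 1) :
    HasSum (fun n : ℕ => a ^ n / n) (-Real.log (1 - a)) := by
  have hC := Complex.hasSum_taylorSeries_neg_log (z := (a : ℂ))
    (by simpa [Complex.norm_real, abs_of_nonneg h0] using h1)
  rw [← Complex.hasSum_ofReal]
  convert hC using 2 with n
  · push_cast; ring
  · rw [show ((1 : ℂ) - a) = ((1 - a : ℝ) : ℂ) by push_cast; ring,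
      ← Complex.ofReal_log (by linarith)]
    push_cast; ring

lemma abs_log_one_sub_le {x : ℂ} (hx : ‖x‖ < 1) :
    ‖Complex.log (1 - x)‖ ≤ -Real.log (1 - ‖x‖) := by
  have hC := Complex.hasSum_taylorSeries_neg_log (z := x) (by simpa using hx)
  have hR := hasSum_neg_log_real (norm_nonneg x) hx
  have hnorm : ∀ n : ℕ, ‖x ^ n / (n : ℂ)‖ = (‖x‖) ^ n / (n : ℝ) := by
    intro n; simp [norm_div, norm_pow, Complex.norm_natCast]
  calc ‖Complex.log (1 - x)‖ = ‖∑' n : ℕ, x ^ n / (n : ℂ)‖ := by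
        rw [hC.tsum_eq, norm_neg]
    _ ≤ ∑' n : ℕ, ‖x ^ n / (n : ℂ)‖ := by
        apply norm_tsum_le_tsum_norm
        simpa only [hnorm] using hR.summable
    _ = -Real.log (1 - ‖x‖) := by
        rw [← hR.tsum_eq]; exact tsum_congr hnorm

lemma neg_log_nonneg {t : ℝ} (h0 : 0 ≤ t) (h1 : t < 1) : 0 ≤ -Real.log (1 - t) := by
  simpa using Real.log_nonpos (by linarith) (by linarith)

lemma neg_log_le {t : ℝ} {c : ℝ} (h0 : 0 ≤ t) (htc : t ≤ c) (hc : c < 1) :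
    -Real.log (1 - t) ≤ t * (1 - c)⁻¹ := by
  have h1 : t < 1 := lt_of_le_of_lt htc hc
  have h2 : (0:ℝ) < 1 - t := by linarith
  have := Real.log_le_sub_one_of_pos (x := (1 - t)⁻¹) (by positivity)
  rw [Real.log_inv] at this
  have h3 : (1 - t)⁻¹ - 1 = t / (1 - t) := by field_simp; ring
  rw [h3] at this
  refine this.trans ?_
  rw [div_eq_mul_inv]
  gcongr

lemma summable_neg_log_geom {a r : ℝ} (ha0 : 0 ≤ a) (ha : a < 1) (hr0 : 0 ≤ r) (hr : r < 1) :
    Summable (fun i : ℕ => -Real.log (1 - a * r ^ i)) := by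
  have hb : ∀ i : ℕ, a * r ^ i ≤ a := by
    intro i
    calc a * r ^ i ≤ a * 1 := by
          apply mul_le_mul_of_nonneg_left _ ha0
          exact pow_le_one₀ hr0 hr.le
      _ = a := mul_one a
  apply Summable.of_nonneg_of_le
    (fun i => neg_log_nonneg (by positivity) (lt_of_le_of_lt (hb i) ha))
    (fun i => neg_log_le (by positivity) (hb i) ha)
  exact ((summable_geometric_of_lt_one hr0 hr).mul_left a).mul_right _


lemma key {s t q : ℂ} (c : ℝ) (hs : ‖s‖ < 1) (ht : ‖t‖ < 1)
    (hq : ‖q‖ < 1) :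
    ∃ (W : ℂ) (L : ℝ), pochC s t q c = Complex.exp W ∧
      pochR (‖s‖) (‖t‖) (‖q‖) (-|c|) = Real.exp L ∧
      ‖W‖ ≤ L := by
  set a := ‖s‖ with ha
  set b := ‖t‖ with hb
  set r := ‖q‖ with hrr
  have ha0 : 0 ≤ a := norm_nonneg s
  have hb0 : 0 ≤ b := norm_nonneg t
  have hr0 : 0 ≤ r := norm_nonneg q
  have habs_s : ∀ i : ℕ, ‖s * q ^ i‖ = a * r ^ i := by
    intro i; rw [norm_mul, norm_pow]
  have habs_t : ∀ i : ℕ, ‖t * q ^ i‖ = b * r ^ i := by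
    intro i; rw [norm_mul, norm_pow]
  have hpow : ∀ i : ℕ, r ^ i ≤ 1 := fun i => pow_le_one₀ hr0 hq.le
  have hlt_s : ∀ i : ℕ, a * r ^ i < 1 := by
    intro i
    calc a * r ^ i ≤ a * 1 := mul_le_mul_of_nonneg_left (hpow i) ha0
      _ = a := mul_one a
      _ < 1 := hs
  have hlt_t : ∀ i : ℕ, b * r ^ i < 1 := by
    intro i
    calc b * r ^ i ≤ b * 1 := mul_le_mul_of_nonneg_left (hpow i) hb0
      _ = b := mul_one b
      _ < 1 := ht
  have hlt_s' : ∀ i : ℕ, ‖s * q ^ i‖ < 1 := fun i => (habs_s i) ▸ hlt_s i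
  have hlt_t' : ∀ i : ℕ, ‖t * q ^ i‖ < 1 := fun i => (habs_t i) ▸ hlt_t i
  have hne_s : ∀ i : ℕ, (1 : ℂ) - s * q ^ i ≠ 0 := by
    intro i h
    have h' : s * q ^ i = 1 := by linear_combination -h
    have := hlt_s' i
    rw [h'] at this
    simp at this
  have hne_t : ∀ i : ℕ, (1 : ℂ) - t * q ^ i ≠ 0 := by
    intro i h
    have h' : t * q ^ i = 1 := by linear_combination -h
    have := hlt_t' i
    rw [h'] at this
    simp at this
  have hgeom_s := summable_neg_log_geom ha0 hs hr0 hq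
  have hgeom_t := summable_neg_log_geom hb0 ht hr0 hq
  have hbound_s : ∀ i : ℕ, ‖Complex.log (1 - s * q ^ i)‖ ≤ -Real.log (1 - a * r ^ i) := by
    intro i
    simpa [habs_s i] using abs_log_one_sub_le (hlt_s' i)
  have hbound_t : ∀ i : ℕ, ‖Complex.log (1 - t * q ^ i)‖ ≤ -Real.log (1 - b * r ^ i) := by
    intro i
    simpa [habs_t i] using abs_log_one_sub_le (hlt_t' i)
  have hsum_s : Summable (fun i : ℕ => Complex.log (1 - s * q ^ i)) :=
    Summable.of_norm (Summable.of_nonneg_of_le (fun i => norm_nonneg _) hbound_s hgeom_s)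
  have hsum_t : Summable (fun i : ℕ => Complex.log (1 - t * q ^ i)) :=
    Summable.of_norm (Summable.of_nonneg_of_le (fun i => norm_nonneg _) hbound_t hgeom_t)
  -- complex side
  set g : ℕ → ℂ :=
    fun i => (Complex.log (1 - s * q ^ i) + Complex.log (1 - t * q ^ i)) * (c : ℂ) with hgdef
  have hg : Summable g := (hsum_s.add hsum_t).mul_right _
  have hprodC : HasProd (fun i => Complex.exp (g i)) (Complex.exp (∑' i, g i)) :=
    hg.hasSum.cexp
  have hpochC : pochC s t q c = Complex.exp (∑' i, g i) := by
    rw [pochC, ← hprodC.tprod_eq]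
    apply tprod_congr
    intro i
    rw [Complex.cpow_def_of_ne_zero (hne_s i), Complex.cpow_def_of_ne_zero (hne_t i),
      ← Complex.exp_add, hgdef]
    ring_nf
  -- real side
  have hpos_s : ∀ i : ℕ, (0:ℝ) < 1 - a * r ^ i := fun i => by linarith [hlt_s i]
  have hpos_t : ∀ i : ℕ, (0:ℝ) < 1 - b * r ^ i := fun i => by linarith [hlt_t i]
  have hrlog_s : Summable (fun i : ℕ => Real.log (1 - a * r ^ i)) := by
    simpa using hgeom_s.neg
  have hrlog_t : Summable (fun i : ℕ => Real.log (1 - b * r ^ i)) := by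
    simpa using hgeom_t.neg
  set G : ℕ → ℝ :=
    fun i => (Real.log (1 - a * r ^ i) + Real.log (1 - b * r ^ i)) * (-|c|) with hGdef
  have hG : Summable G := (hrlog_s.add hrlog_t).mul_right _
  have hprodR : HasProd (fun i => Real.exp (G i)) (Real.exp (∑' i, G i)) :=
    hG.hasSum.rexp
  have hpochR : pochR a b r (-|c|) = Real.exp (∑' i, G i) := by
    rw [pochR, ← hprodR.tprod_eq]
    apply tprod_congr
    intro i
    rw [Real.rpow_def_of_pos (mul_pos (hpos_s i) (hpos_t i)),
      Real.log_mul (hpos_s i).ne' (hpos_t i).ne', hGdef]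
  refine ⟨∑' i, g i, ∑' i, G i, hpochC, hpochR, ?_⟩
  -- the bound
  have hsumM : Summable (fun i : ℕ =>
      -Real.log (1 - a * r ^ i) + -Real.log (1 - b * r ^ i)) := hgeom_s.add hgeom_t
  have hnorm_g : ∀ i : ℕ, ‖g i‖ ≤
      (-Real.log (1 - a * r ^ i) + -Real.log (1 - b * r ^ i)) * |c| := by
    intro i
    rw [hgdef]
    simp only [norm_mul, Complex.norm_real, Real.norm_eq_abs]
    apply mul_le_mul_of_nonneg_right _ (abs_nonneg c)
    exact (norm_add_le _ _).trans (add_le_add (hbound_s i) (hbound_t i))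
  have hsumN : Summable (fun i : ℕ => ‖g i‖) :=
    Summable.of_nonneg_of_le (fun i => norm_nonneg _) hnorm_g (hsumM.mul_right _)
  calc ‖∑' i, g i‖ ≤ ∑' i, ‖g i‖ := norm_tsum_le_tsum_norm hsumN
    _ ≤ ∑' i, (-Real.log (1 - a * r ^ i) + -Real.log (1 - b * r ^ i)) * |c| :=
        Summable.tsum_le_tsum hnorm_g hsumN (hsumM.mul_right _)
    _ = ∑' i, G i := by
        apply tsum_congr
        intro i
        rw [hGdef]
        ring

theorem stmt15 (J : ℕ) (hJ : 0 < J) (u : Fin J → ℤ) (hu : ∀ j, u j ≠ 0)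
    (δ : ℝ) (hδ : 0 < δ) (s t q : Fin J → ℂ)
    (hs : ∀ j, ‖s j‖ < 1) (ht : ∀ j, ‖t j‖ < 1)
    (hq : ∀ j, ‖q j‖ < 1) :
    ‖(∏ j, pochC (s j) (t j) (q j) ((u j : ℝ) * δ)) - 1‖ ≤
      (∏ j, pochR (‖s j‖) (‖t j‖) (‖q j‖)
        (-(|(u j : ℝ)| * δ))) - 1 := by
  have hexp : ∀ j, -|(u j : ℝ) * δ| = -(|(u j : ℝ)| * δ) := by
    intro j; rw [abs_mul, abs_of_pos hδ]
  choose W L h1 h2 h3 using fun j =>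
    key ((u j : ℝ) * δ) (hs j) (ht j) (hq j)
  have hprodC : (∏ j, pochC (s j) (t j) (q j) ((u j : ℝ) * δ)) =
      Complex.exp (∑ j, W j) := by
    rw [Complex.exp_sum]
    exact Finset.prod_congr rfl fun j _ => h1 j
  have hprodR : (∏ j, pochR (‖s j‖) (‖t j‖) (‖q j‖)
      (-(|(u j : ℝ)| * δ))) = Real.exp (∑ j, L j) := by
    rw [Real.exp_sum]
    refine Finset.prod_congr rfl fun j _ => ?_
    rw [← hexp j]
    exact h2 j
  rw [hprodC, hprodR]
  refine (abs_cexp_sub_one_le _).trans (sub_le_sub_right (Real.exp_le_exp.mpr ?_) 1)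
  calc ‖∑ j, W j‖ ≤ ∑ j, ‖W j‖ := by
        simpa using norm_sum_le Finset.univ W
    _ ≤ ∑ j, L j := Finset.sum_le_sum fun j _ => h3 j
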